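/- Fix u, β ∈ ℝ. Assume: (i) φ(β) = lim_{N→∞} −(1/N) ln Z_N(β) exists and is finite; (ii) there is r₀ > 0 such that for every 0 < r ≤ r₀, P_N{h_N ∈ [u−r, u+r]} > 0 for all N, the limit L(r) = lim_{N→∞} (1/N) ln P_N{h_N ∈ [u−r, u+r]} exists and is finite, and L(r) → s(u) ∈ ℝ as r → 0⁺. Then the specific relative entropy exists and equals d_β^u := lim_{r→0⁺} limsup_{N→∞} (1/N) D(P_N^{u,r} ‖ P_{N,β}) = lim_{r→0⁺} liminf_{N→∞} (1/N) D(P_N^{u,r} ‖ P_{N,β}) = β u − s(u) − φ(β). -/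

import Mathlib

/-!
STATEMENT 16: The specific relative entropy between the microcanonical and canonical
ensembles. Assuming the free energy `φ(β) = lim -(1/N) ln Z_N(β)` exists and is finite,
and the entropy limits `L(r) = lim (1/N) ln P_N{h_N ∈ [u-r,u+r]}` exist for small `r > 0`
with `L(r) → s(u)` as `r → 0⁺`, the specific relative entropy exists and
`d_β^u = lim_{r→0⁺} limsup_N (1/N) D(P_N^{u,r}‖P_{N,β})
      = lim_{r→0⁺} liminf_N (1/N) D(P_N^{u,r}‖P_{N,β}) = β u - s(u) - φ(β)`,
where `D(P‖Q) = ∫ ln (dP/dQ) dP`.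
-/

open MeasureTheory Filter Set Topology
open scoped ENNReal

variable {Ω : ℕ → Type*} [∀ N, MeasurableSpace (Ω N)]

/-- Partition function of the canonical ensemble at inverse temperature `β`. -/
noncomputable def canZ (P : ∀ N, Measure (Ω N)) (h : ∀ N, Ω N → ℝ) (β : ℝ) (N : ℕ) : ℝ≥0∞ :=
  ∫⁻ ω, ENNReal.ofReal (Real.exp (-(β * (N : ℝ) * h N ω))) ∂(P N)

/-- The canonical ensemble `P_{N,β} = Z_N(β)⁻¹ e^{-βNh_N} P_N`. -/
noncomputable def canMeasure (P : ∀ N, Measure (Ω N)) (h : ∀ N, Ω N → ℝ) (β : ℝ) (N : ℕ) :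
    Measure (Ω N) :=
  (canZ P h β N)⁻¹ •
    (P N).withDensity fun ω => ENNReal.ofReal (Real.exp (-(β * (N : ℝ) * h N ω)))

/-- The microcanonical ensemble `P_N^{u,r} = P_N(· | h_N ∈ [u-r,u+r])`. -/
noncomputable def microMeasure (P : ∀ N, Measure (Ω N)) (h : ∀ N, Ω N → ℝ) (u r : ℝ)
    (N : ℕ) : Measure (Ω N) :=
  ProbabilityTheory.cond (P N) {ω | h N ω ∈ Set.Icc (u - r) (u + r)}

/-- Relative entropy `D(P_N^{u,r} ‖ P_{N,β}) = ∫ ln (dP_N^{u,r}/dP_{N,β}) dP_N^{u,r}`. -/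
noncomputable def relEnt (P : ∀ N, Measure (Ω N)) (h : ∀ N, Ω N → ℝ) (β u r : ℝ)
    (N : ℕ) : ℝ :=
  ∫ ω, Real.log (((microMeasure P h u r N).rnDeriv (canMeasure P h β N) ω).toReal)
    ∂(microMeasure P h u r N)

lemma sandwich_aux {a b c : ℕ → ℝ} {lb lc : ℝ}
    (hb : Tendsto b atTop (𝓝 lb)) (hc : Tendsto c atTop (𝓝 lc))
    (hba : ∀ᶠ n in atTop, b n ≤ a n) (hac : ∀ᶠ n in atTop, a n ≤ c n) :
    (lb ≤ liminf a atTop ∧ liminf a atTop ≤ lc) ∧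
    (lb ≤ limsup a atTop ∧ limsup a atTop ≤ lc) := by
  have hbd_above : ∀ᶠ n in atTop, a n ≤ lc + 1 := by
    filter_upwards [hac, hc.eventually (eventually_le_nhds (lt_add_one lc))] with n h1 h2
    linarith
  have hbd_below : ∀ᶠ n in atTop, lb - 1 ≤ a n := by
    filter_upwards [hba, hb.eventually (eventually_ge_nhds (by linarith : lb - 1 < lb))] with n h1 h2
    linarith
  have hA1 : IsBoundedUnder (· ≤ ·) atTop a := isBoundedUnder_of_eventually_le hbd_above
  have hA2 : IsBoundedUnder (· ≥ ·) atTop a := isBoundedUnder_of_eventually_ge hbd_below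
  have e1 : limsup a atTop ≤ limsup c atTop :=
    limsup_le_limsup hac hA2.isCoboundedUnder_le hc.isBoundedUnder_le
  have e2 : limsup b atTop ≤ limsup a atTop :=
    limsup_le_limsup hba hb.isBoundedUnder_ge.isCoboundedUnder_le hA1
  have e3 : liminf a atTop ≤ liminf c atTop :=
    liminf_le_liminf hac hA2 hc.isBoundedUnder_le.isCoboundedUnder_ge
  have e4 : liminf b atTop ≤ liminf a atTop :=
    liminf_le_liminf hba hb.isBoundedUnder_ge hA1.isCoboundedUnder_ge
  rw [hb.limsup_eq] at e2
  rw [hc.limsup_eq] at e1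
  rw [hb.liminf_eq] at e4
  rw [hc.liminf_eq] at e3
  exact ⟨⟨e4, e3⟩, ⟨e2, e1⟩⟩

lemma micro_key
    (P : ∀ N, Measure (Ω N)) [∀ N, IsProbabilityMeasure (P N)]
    (h : ∀ N, Ω N → ℝ) (hmeas : ∀ N, Measurable (h N))
    (β u r : ℝ) (N : ℕ)
    (hZ0 : canZ P h β N ≠ 0) (hZt : canZ P h β N ≠ ∞)
    (hA0 : P N {ω | h N ω ∈ Set.Icc (u - r) (u + r)} ≠ 0) :
    relEnt P h β u r N = Real.log ((canZ P h β N).toReal)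
      - Real.log ((P N {ω | h N ω ∈ Set.Icc (u - r) (u + r)}).toReal)
      + β * (N : ℝ) * ∫ ω, h N ω ∂(microMeasure P h u r N)
    ∧ (∫ ω, h N ω ∂(microMeasure P h u r N)) ∈ Set.Icc (u - r) (u + r) := by
  set A : Set (Ω N) := {ω | h N ω ∈ Set.Icc (u - r) (u + r)} with hAdef
  have hAm : MeasurableSet A := (hmeas N) measurableSet_Icc
  have hAt : P N A ≠ ∞ := measure_ne_top _ _
  set g : Ω N → ℝ≥0∞ := fun ω => ENNReal.ofReal (Real.exp (-(β * (N : ℝ) * h N ω))) with hgdef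
  have hgm : Measurable g := (((hmeas N).const_mul (β * (N : ℝ))).neg.exp).ennreal_ofReal
  set c : ℝ≥0∞ := (P N A)⁻¹ * canZ P h β N with hcdef
  set f : Ω N → ℝ≥0∞ :=
    fun ω => A.indicator (fun ω => c * ENNReal.ofReal (Real.exp (β * (N : ℝ) * h N ω))) ω
      with hfdef
  have hfm : Measurable f :=
    ((((hmeas N).const_mul (β * (N : ℝ))).exp.ennreal_ofReal).const_mul c).indicator hAm
  have hgf : g * f = fun ω => A.indicator (fun _ => c) ω := by
    funext ω
    by_cases hω : ω ∈ A
    · simp only [Pi.mul_apply, hfdef, Set.indicator_of_mem hω]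
      calc g ω * (c * ENNReal.ofReal (Real.exp (β * (N : ℝ) * h N ω)))
          = c * (ENNReal.ofReal (Real.exp (-(β * (N : ℝ) * h N ω))) *
              ENNReal.ofReal (Real.exp (β * (N : ℝ) * h N ω))) := by rw [hgdef]; ring
        _ = c := by
            rw [← ENNReal.ofReal_mul (Real.exp_nonneg _), ← Real.exp_add, neg_add_cancel,
              Real.exp_zero, ENNReal.ofReal_one, mul_one]
    · simp [hfdef, Set.indicator_of_notMem hω]
  have hmicro : (canMeasure P h β N).withDensity f = microMeasure P h u r N := by
    rw [canMeasure, withDensity_smul_measure, ← withDensity_mul _ hgm hfm, hgf]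
    have hind : (fun ω => A.indicator (fun _ => c) ω) = c • (A.indicator (1 : Ω N → ℝ≥0∞)) := by
      funext ω
      by_cases hω : ω ∈ A <;>
        simp [Set.indicator_of_mem, Set.indicator_of_notMem, hω]
    rw [hind, withDensity_smul c (measurable_one.indicator hAm), withDensity_indicator_one hAm,
      microMeasure, ProbabilityTheory.cond, smul_smul]
    congr 1
    rw [hcdef, mul_comm (P N A)⁻¹ (canZ P h β N), ← mul_assoc,
      ENNReal.inv_mul_cancel hZ0 hZt, one_mul]
  haveI : IsFiniteMeasure (canMeasure P h β N) := by
    constructor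
    rw [canMeasure, Measure.smul_apply, withDensity_apply _ MeasurableSet.univ,
      setLIntegral_univ, smul_eq_mul]
    rw [show (∫⁻ ω, ENNReal.ofReal (Real.exp (-(β * (N : ℝ) * h N ω))) ∂(P N)) = canZ P h β N
      from rfl]
    rw [ENNReal.inv_mul_cancel hZ0 hZt]
    exact ENNReal.one_lt_top
  have hac : microMeasure P h u r N ≪ canMeasure P h β N :=
    hmicro ▸ withDensity_absolutelyContinuous _ f
  have hrn : (microMeasure P h u r N).rnDeriv (canMeasure P h β N) =ᵐ[canMeasure P h β N] f := by
    rw [← hmicro]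
    exact Measure.rnDeriv_withDensity _ hfm
  have hrn' : (microMeasure P h u r N).rnDeriv (canMeasure P h β N)
      =ᵐ[microMeasure P h u r N] f := hrn.filter_mono hac.ae_le
  have haeA : ∀ᵐ ω ∂(microMeasure P h u r N), ω ∈ A := by
    rw [ae_iff]
    have hset : {ω | ¬ ω ∈ A} = Aᶜ := rfl
    rw [hset, microMeasure, ProbabilityTheory.cond, Measure.smul_apply,
      Measure.restrict_apply hAm.compl, compl_inter_self, measure_empty, smul_eq_mul, mul_zero]
  haveI : IsProbabilityMeasure (microMeasure P h u r N) :=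
    ProbabilityTheory.cond_isProbabilityMeasure hA0
  have hPApos : 0 < (P N A).toReal := ENNReal.toReal_pos hA0 hAt
  have hZpos : 0 < (canZ P h β N).toReal := ENNReal.toReal_pos hZ0 hZt
  have hint : Integrable (h N) (microMeasure P h u r N) := by
    refine Integrable.mono' (integrable_const (|u| + |r|)) ((hmeas N).aestronglyMeasurable) ?_
    filter_upwards [haeA] with ω hω
    have hω' : u - r ≤ h N ω ∧ h N ω ≤ u + r := hω
    rw [Real.norm_eq_abs, abs_le]
    constructor <;>
      [ (have := hω'.1); (have := hω'.2) ] <;>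
      [ nlinarith [le_abs_self u, neg_abs_le u, le_abs_self r, neg_abs_le r];
        nlinarith [le_abs_self u, neg_abs_le u, le_abs_self r, neg_abs_le r] ]
  have hcongr : ∀ᵐ ω ∂(microMeasure P h u r N),
      Real.log (((microMeasure P h u r N).rnDeriv (canMeasure P h β N) ω).toReal)
        = (Real.log ((canZ P h β N).toReal) - Real.log ((P N A).toReal)) + β * (N : ℝ) * h N ω := by
    filter_upwards [hrn', haeA] with ω hrw hω
    rw [hrw, hfdef]
    simp only [Set.indicator_of_mem hω]
    rw [hcdef, ENNReal.toReal_mul, ENNReal.toReal_mul, ENNReal.toReal_inv,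
      ENNReal.toReal_ofReal (Real.exp_nonneg _)]
    rw [Real.log_mul (by positivity) (Real.exp_ne_zero _),
      Real.log_mul (by positivity) (by positivity), Real.log_inv, Real.log_exp]
    ring
  have hm1 : u - r ≤ ∫ ω, h N ω ∂(microMeasure P h u r N) := by
    have := integral_mono_ae (integrable_const (u - r)) hint
      (haeA.mono fun ω (hω : u - r ≤ h N ω ∧ h N ω ≤ u + r) => hω.1)
    simpa using this
  have hm2 : (∫ ω, h N ω ∂(microMeasure P h u r N)) ≤ u + r := by
    have := integral_mono_ae hint (integrable_const (u + r))
      (haeA.mono fun ω (hω : u - r ≤ h N ω ∧ h N ω ≤ u + r) => hω.2)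
    simpa using this
  refine ⟨?_, hm1, hm2⟩
  rw [relEnt, integral_congr_ae hcongr,
    integral_add (integrable_const _) (hint.const_mul (β * (N : ℝ))),
    integral_const, probReal_univ, one_smul, MeasureTheory.integral_const_mul]

theorem specific_relative_entropy_eq_canonical_rate
    (P : ∀ N, Measure (Ω N)) [∀ N, IsProbabilityMeasure (P N)]
    (h : ∀ N, Ω N → ℝ) (hmeas : ∀ N, Measurable (h N))
    (β u : ℝ)
    (hZfin : ∀ N, 0 < canZ P h β N ∧ canZ P h β N ≠ ∞)
    (φβ : ℝ)
    (hφ : Tendsto (fun N : ℕ => -((N : ℝ)⁻¹ * Real.log ((canZ P h β N).toReal)))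
      atTop (𝓝 φβ))
    (r₀ : ℝ) (hr₀ : 0 < r₀)
    (hp : ∀ r ∈ Set.Ioc (0 : ℝ) r₀, ∀ N,
      0 < P N {ω | h N ω ∈ Set.Icc (u - r) (u + r)})
    (L : ℝ → ℝ)
    (hL : ∀ r ∈ Set.Ioc (0 : ℝ) r₀,
      Tendsto (fun N : ℕ =>
          (N : ℝ)⁻¹ * Real.log ((P N {ω | h N ω ∈ Set.Icc (u - r) (u + r)}).toReal))
        atTop (𝓝 (L r)))
    (su : ℝ) (hLs : Tendsto L (𝓝[>] 0) (𝓝 su)) :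
    Tendsto (fun r : ℝ => limsup (fun N : ℕ => (N : ℝ)⁻¹ * relEnt P h β u r N) atTop)
      (𝓝[>] 0) (𝓝 (β * u - su - φβ)) ∧
    Tendsto (fun r : ℝ => liminf (fun N : ℕ => (N : ℝ)⁻¹ * relEnt P h β u r N) atTop)
      (𝓝[>] 0) (𝓝 (β * u - su - φβ)) := by
  have hZlog : Tendsto (fun N : ℕ => (N : ℝ)⁻¹ * Real.log ((canZ P h β N).toReal))
      atTop (𝓝 (-φβ)) := by
    have := hφ.neg
    simpa using this
  -- key bounds for each fixed r
  have key : ∀ r ∈ Set.Ioc (0 : ℝ) r₀,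
      ((β * u - L r - φβ - |β| * r ≤
          liminf (fun N : ℕ => (N : ℝ)⁻¹ * relEnt P h β u r N) atTop ∧
        liminf (fun N : ℕ => (N : ℝ)⁻¹ * relEnt P h β u r N) atTop ≤
          β * u - L r - φβ + |β| * r) ∧
      (β * u - L r - φβ - |β| * r ≤
          limsup (fun N : ℕ => (N : ℝ)⁻¹ * relEnt P h β u r N) atTop ∧
        limsup (fun N : ℕ => (N : ℝ)⁻¹ * relEnt P h β u r N) atTop ≤
          β * u - L r - φβ + |β| * r)) := by
    intro r hr
    set b : ℕ → ℝ := fun N =>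
      (N : ℝ)⁻¹ * Real.log ((canZ P h β N).toReal)
        - (N : ℝ)⁻¹ * Real.log ((P N {ω | h N ω ∈ Set.Icc (u - r) (u + r)}).toReal)
        + (β * u - |β| * r) with hbdef
    set cc : ℕ → ℝ := fun N =>
      (N : ℝ)⁻¹ * Real.log ((canZ P h β N).toReal)
        - (N : ℝ)⁻¹ * Real.log ((P N {ω | h N ω ∈ Set.Icc (u - r) (u + r)}).toReal)
        + (β * u + |β| * r) with hccdef
    have hb : Tendsto b atTop (𝓝 (-φβ - L r + (β * u - |β| * r))) :=
      (hZlog.sub (hL r hr)).add tendsto_const_nhds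
    have hcc : Tendsto cc atTop (𝓝 (-φβ - L r + (β * u + |β| * r))) :=
      (hZlog.sub (hL r hr)).add tendsto_const_nhds
    have hsw : ∀ᶠ N in atTop,
        b N ≤ (N : ℝ)⁻¹ * relEnt P h β u r N ∧ (N : ℝ)⁻¹ * relEnt P h β u r N ≤ cc N := by
      filter_upwards [eventually_ge_atTop 1] with N hN
      have hNne : (N : ℝ) ≠ 0 := Nat.cast_ne_zero.2 (by omega)
      obtain ⟨heq, hmem⟩ := micro_key P h hmeas β u r N (hZfin N).1.ne' (hZfin N).2
        (hp r hr N).ne'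
      set m := ∫ ω, h N ω ∂(microMeasure P h u r N) with hmdef
      have haN : (N : ℝ)⁻¹ * relEnt P h β u r N =
          (N : ℝ)⁻¹ * Real.log ((canZ P h β N).toReal)
            - (N : ℝ)⁻¹ * Real.log ((P N {ω | h N ω ∈ Set.Icc (u - r) (u + r)}).toReal)
            + β * m := by
        rw [heq]
        field_simp
      have hx : |β * m - β * u| ≤ |β| * r := by
        rw [← mul_sub, abs_mul]
        refine mul_le_mul_of_nonneg_left ?_ (abs_nonneg β)
        rw [abs_le]
        exact ⟨by linarith [hmem.1], by linarith [hmem.2]⟩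
      have hx' := abs_le.1 hx
      constructor
      · rw [haN, hbdef]
        have := hx'.1
        simp only
        linarith
      · rw [haN, hccdef]
        have := hx'.2
        simp only
        linarith
    have := sandwich_aux hb hcc (hsw.mono fun N hN => hN.1) (hsw.mono fun N hN => hN.2)
    constructor
    · constructor
      · have := this.1.1; linarith
      · have := this.1.2; linarith
    · constructor
      · have := this.2.1; linarith
      · have := this.2.2; linarith
  have habs : Tendsto (fun r : ℝ => |β| * r) (𝓝[>] 0) (𝓝 0) := by
    have h1 : Tendsto (fun r : ℝ => |β| * r) (𝓝 (0 : ℝ)) (𝓝 (|β| * 0)) :=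
      (continuous_const.mul continuous_id).tendsto 0
    rw [mul_zero] at h1
    exact h1.mono_left nhdsWithin_le_nhds
  have hLB : Tendsto (fun r : ℝ => β * u - L r - φβ - |β| * r) (𝓝[>] 0)
      (𝓝 (β * u - su - φβ)) := by
    have hc1 : Tendsto (fun _ : ℝ => β * u) (𝓝[>] (0:ℝ)) (𝓝 (β * u)) := tendsto_const_nhds
    have hc2 : Tendsto (fun _ : ℝ => φβ) (𝓝[>] (0:ℝ)) (𝓝 φβ) := tendsto_const_nhds
    have := ((hc1.sub hLs).sub hc2).sub habs
    simpa using this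
  have hUB : Tendsto (fun r : ℝ => β * u - L r - φβ + |β| * r) (𝓝[>] 0)
      (𝓝 (β * u - su - φβ)) := by
    have hc1 : Tendsto (fun _ : ℝ => β * u) (𝓝[>] (0:ℝ)) (𝓝 (β * u)) := tendsto_const_nhds
    have hc2 : Tendsto (fun _ : ℝ => φβ) (𝓝[>] (0:ℝ)) (𝓝 φβ) := tendsto_const_nhds
    have := ((hc1.sub hLs).sub hc2).add habs
    simpa using this
  have hmem : Set.Ioc (0 : ℝ) r₀ ∈ 𝓝[>] (0 : ℝ) := Ioc_mem_nhdsGT hr₀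
  constructor
  · refine tendsto_of_tendsto_of_tendsto_of_le_of_le' hLB hUB ?_ ?_
    · filter_upwards [hmem] with r hr
      exact ((key r hr).2).1
    · filter_upwards [hmem] with r hr
      exact ((key r hr).2).2
  · refine tendsto_of_tendsto_of_tendsto_of_le_of_le' hLB hUB ?_ ?_
    · filter_upwards [hmem] with r hr
      exact ((key r hr).1).1
    · filter_upwards [hmem] with r hr
      exact ((key r hr).1).2
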